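/- The Schmidt rank of the Dicke state D_{m,n} ∈ (ℂ²)^{⊗(m+n)} across the bipartite cut separating the first m subsystems from the last n subsystems equals min(m,n)+1 = m+1 (assuming m ≤ n). Hence the border rank of D_{m,n} is exactly m+1. -/

import Mathlib

open scoped BigOperators

/-- The Dicke state D_{m,n} ∈ (ℂ²)^{⊗(m+n)}: sum of all basis vectors with
exactly m ones. -/
noncomputable def Dicke (m n : ℕ) : ((_ : Fin (m + n)) → Fin 2) → ℂ :=
  fun v => if (Finset.univ.filter fun i => v i = 1).card = m then 1 else 0

/-- Flattening of D_{m,n} across the cut {1,…,m} vs {m+1,…,m+n}. -/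
noncomputable def DickeFlat (m n : ℕ) :
    Matrix ((_ : Fin m) → Fin 2) ((_ : Fin n) → Fin 2) ℂ :=
  fun x y => if (Finset.univ.filter fun i => x i = 1).card
      + (Finset.univ.filter fun i => y i = 1).card = m then 1 else 0

/-- A tensor on (ℂ²)^{⊗k} has rank at most r. -/
def rankLE {k : ℕ} (T : ((_ : Fin k) → Fin 2) → ℂ) (r : ℕ) : Prop :=
  ∃ u : Fin r → Fin k → Fin 2 → ℂ, ∀ v, T v = ∑ s : Fin r, ∏ i, u s i (v i)

/-- T has border rank at most r: it is a limit of tensors of rank ≤ r. -/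
def borderRankLE {k : ℕ} (T : ((_ : Fin k) → Fin 2) → ℂ) (r : ℕ) : Prop :=
  ∃ f : ℕ → (((_ : Fin k) → Fin 2) → ℂ),
    (∀ s, rankLE (f s) r) ∧ Filter.Tendsto f Filter.atTop (nhds T)

namespace DickeAux

open scoped Matrix

/-- Hamming weight of a binary vector. -/
def wt {k : ℕ} (v : Fin k → Fin 2) : ℕ := (Finset.univ.filter fun i => v i = 1).card

lemma wt_le {k : ℕ} (v : Fin k → Fin 2) : wt v ≤ k := by
  simpa [wt] using Finset.card_filter_le Finset.univ (fun i => v i = 1)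

lemma Dicke_apply (m n : ℕ) (v : Fin (m + n) → Fin 2) :
    Dicke m n v = if wt v = m then 1 else 0 := rfl

lemma DickeFlat_apply (m n : ℕ) (x : Fin m → Fin 2) (y : Fin n → Fin 2) :
    DickeFlat m n x y = if wt x + wt y = m then 1 else 0 := rfl

lemma wt_append {m n : ℕ} (x : Fin m → Fin 2) (y : Fin n → Fin 2) :
    wt (Fin.append x y) = wt x + wt y := by
  unfold wt
  rw [Finset.card_filter, Finset.card_filter, Finset.card_filter, Fin.sum_univ_add]
  simp [Fin.append_left, Fin.append_right]

lemma prod_if {k : ℕ} (a : ℂ) (v : Fin k → Fin 2) :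
    (∏ i, (if v i = 1 then a else 1)) = a ^ wt v := by
  rw [Finset.prod_ite, Finset.prod_const, Finset.prod_const, one_pow, mul_one]
  rfl

/-- threshold vector of weight j -/
def step (k j : ℕ) : Fin k → Fin 2 := fun i => if (i : ℕ) < j then 1 else 0

lemma wt_step (k j : ℕ) (h : j ≤ k) : wt (step k j) = j := by
  unfold wt step
  have h1 : (Finset.univ.filter fun i : Fin k =>
      (if (i : ℕ) < j then (1 : Fin 2) else 0) = 1)
      = Finset.univ.filter fun i : Fin k => (i : ℕ) < j := by
    ext i
    by_cases hi : (i : ℕ) < j <;> simp [hi]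
  rw [h1]
  have h2 : (Finset.univ.filter fun i : Fin k => (i : ℕ) < j).card
      = (Finset.range j).card := by
    refine Finset.card_bij (fun (i : Fin k) _ => (i : ℕ)) ?_ ?_ ?_
    · intro a ha
      simp only [Finset.mem_filter] at ha
      simpa using ha.2
    · intro a ha b hb hab
      exact Fin.val_injective hab
    · intro b hb
      simp only [Finset.mem_range] at hb
      exact ⟨⟨b, lt_of_lt_of_le hb h⟩, by simp [hb], rfl⟩
  rw [h2, Finset.card_range]

lemma exists_c (m : ℕ) : ∃ c : Fin (m+1) → ℂ,
    ∀ w : Fin (m+1), (∑ j, c j * ((j : ℕ) : ℂ) ^ (w : ℕ))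
      = if (w : ℕ) = m then 1 else 0 := by
  set V : Matrix (Fin (m+1)) (Fin (m+1)) ℂ :=
    (Matrix.vandermonde fun j : Fin (m+1) => ((j : ℕ) : ℂ))ᵀ with hV
  have hdet : IsUnit V.det := by
    rw [hV, Matrix.det_transpose, Matrix.det_vandermonde]
    rw [isUnit_iff_ne_zero]
    apply Finset.prod_ne_zero_iff.mpr
    intro i _
    apply Finset.prod_ne_zero_iff.mpr
    intro j hj
    rw [Finset.mem_Ioi] at hj
    have : (i : ℕ) ≠ (j : ℕ) := Nat.ne_of_lt hj
    simpa [sub_eq_zero] using fun hh => this (by exact_mod_cast hh.symm)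
  set e : Fin (m+1) → ℂ := fun w => if (w : ℕ) = m then 1 else 0 with he
  refine ⟨V⁻¹.mulVec e, fun w => ?_⟩
  have : V.mulVec (V⁻¹.mulVec e) = e := by
    rw [Matrix.mulVec_mulVec, Matrix.mul_nonsing_inv _ hdet, Matrix.one_mulVec]
  calc (∑ j, (V⁻¹.mulVec e) j * ((j : ℕ) : ℂ) ^ (w : ℕ))
      = (V.mulVec (V⁻¹.mulVec e)) w := by
        simp [Matrix.mulVec, dotProduct, hV, Matrix.vandermonde,
          Matrix.transpose_apply, mul_comm]
    _ = e w := congrFun this w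
    _ = if (w : ℕ) = m then 1 else 0 := rfl

lemma sum_deltaL {α : Type*} [Fintype α] [DecidableEq α] (a : α) (g : α → ℂ) :
    (∑ x, (if x = a then (1:ℂ) else 0) * g x) = g a := by
  simp [ite_mul]

lemma sum_deltaR {α : Type*} [Fintype α] [DecidableEq α] (a : α) (g : α → ℂ) :
    (∑ x, g x * (if x = a then (1:ℂ) else 0)) = g a := by
  simp [mul_ite]

lemma sum_deltaF {N : ℕ} (a : Fin N) (g : Fin N → ℂ) :
    (∑ j : Fin N, (if (j : ℕ) = (a : ℕ) then (1:ℂ) else 0) * g j) = g a := by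
  simp [Fin.val_eq_val, ite_mul]

lemma flat_rank (m n : ℕ) (hmn : m ≤ n) : (DickeFlat m n).rank = m + 1 := by
  apply le_antisymm
  · set A : Matrix ((_ : Fin m) → Fin 2) (Fin (m+1)) ℂ :=
      fun x j => if (j : ℕ) = wt x then 1 else 0 with hA
    set B : Matrix (Fin (m+1)) ((_ : Fin n) → Fin 2) ℂ :=
      fun j y => if (j : ℕ) + wt y = m then 1 else 0 with hB
    have hfac : DickeFlat m n = A * B := by
      ext x y
      rw [Matrix.mul_apply]
      rw [show (∑ j : Fin (m+1), A x j * B j y)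
          = (∑ j : Fin (m+1), (if (j:ℕ) = ((⟨wt x, Nat.lt_succ_of_le (wt_le x)⟩ : Fin (m+1)) : ℕ) then (1:ℂ) else 0)
            * (if (j:ℕ) + wt y = m then 1 else 0)) from rfl]
      rw [sum_deltaF]
      rfl
    rw [hfac]
    calc (A * B).rank ≤ A.rank := Matrix.rank_mul_le_left A B
      _ ≤ Fintype.card (Fin (m+1)) := Matrix.rank_le_card_width A
      _ = m + 1 := by simp
  · set P : Matrix (Fin (m+1)) ((_ : Fin m) → Fin 2) ℂ :=
      fun j x => if x = step m j then 1 else 0 with hP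
    set Q : Matrix ((_ : Fin n) → Fin 2) (Fin (m+1)) ℂ :=
      fun y j => if y = step n (m - (j : ℕ)) then 1 else 0 with hQ
    have hone : P * (DickeFlat m n * Q) = (1 : Matrix (Fin (m+1)) (Fin (m+1)) ℂ) := by
      ext j j'
      rw [Matrix.mul_apply]
      rw [show (∑ x, P j x * (DickeFlat m n * Q) x j')
          = ∑ x, (if x = step m j then (1:ℂ) else 0) * (DickeFlat m n * Q) x j' from rfl]
      rw [sum_deltaL]
      rw [Matrix.mul_apply]
      rw [show (∑ y, DickeFlat m n (step m j) y * Q y j')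
          = ∑ y, DickeFlat m n (step m j) y * (if y = step n (m - (j' : ℕ)) then (1:ℂ) else 0) from rfl]
      rw [sum_deltaR]
      rw [DickeFlat_apply, wt_step m j (by omega), wt_step n (m - (j' : ℕ)) (by omega)]
      have hj := j.isLt
      have hj' := j'.isLt
      rw [Matrix.one_apply]
      by_cases h : j = j'
      · subst h; simp [Nat.add_sub_cancel' (by omega : (j:ℕ) ≤ m)]
      · have : ¬ ((j:ℕ) + (m - (j':ℕ)) = m) := by
          intro hc; apply h; apply Fin.val_injective; omega
        simp [h, this]
    have hcard : (m : ℕ) + 1 = (P * (DickeFlat m n * Q)).rank := by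
      rw [hone, Matrix.rank_one]; simp
    rw [hcard]
    calc (P * (DickeFlat m n * Q)).rank ≤ (DickeFlat m n * Q).rank :=
          Matrix.rank_mul_le_right _ _
      _ ≤ (DickeFlat m n).rank := Matrix.rank_mul_le_left _ _

/-- the (m+1)×(m+1) sampling of a tensor -/
noncomputable def S (m n : ℕ) (T : ((_ : Fin (m + n)) → Fin 2) → ℂ) :
    Matrix (Fin (m+1)) (Fin (m+1)) ℂ :=
  fun j j' => T (Fin.append (step m (j : ℕ)) (step n (m - (j' : ℕ))))

lemma S_Dicke (m n : ℕ) (hmn : m ≤ n) :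
    S m n (Dicke m n) = (1 : Matrix (Fin (m+1)) (Fin (m+1)) ℂ) := by
  ext j j'
  have hj := j.isLt
  have hj' := j'.isLt
  rw [S, Dicke_apply, wt_append, wt_step m j (by omega),
    wt_step n (m - (j' : ℕ)) (by omega), Matrix.one_apply]
  by_cases h : j = j'
  · subst h; simp [Nat.add_sub_cancel' (by omega : (j:ℕ) ≤ m)]
  · have : ¬ ((j:ℕ) + (m - (j':ℕ)) = m) := by
      intro hc; apply h; apply Fin.val_injective; omega
    simp [h, this]

lemma S_det_zero (m n r : ℕ) (hr : r < m + 1)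
    (T : ((_ : Fin (m + n)) → Fin 2) → ℂ) (hT : rankLE T r) :
    (S m n T).det = 0 := by
  obtain ⟨u, hu⟩ := hT
  set P : Matrix (Fin (m+1)) (Fin r) ℂ :=
    fun j t => ∏ i : Fin m, u t (Fin.castAdd n i) (step m (j : ℕ) i) with hP
  set Q : Matrix (Fin r) (Fin (m+1)) ℂ :=
    fun t j' => ∏ i : Fin n, u t (Fin.natAdd m i) (step n (m - (j' : ℕ)) i) with hQ
  have hfac : S m n T = P * Q := by
    ext j j'
    rw [S, hu, Matrix.mul_apply]
    refine Finset.sum_congr rfl fun t _ => ?_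
    rw [hP, hQ]
    simp only [Matrix.of_apply]
    rw [Fin.prod_univ_add]
    congr 1
    · exact Finset.prod_congr rfl fun i _ => by rw [Fin.append_left]
    · exact Finset.prod_congr rfl fun i _ => by rw [Fin.append_right]
  have hrank : (S m n T).rank ≤ r := by
    rw [hfac]
    calc (P * Q).rank ≤ P.rank := Matrix.rank_mul_le_left P Q
      _ ≤ Fintype.card (Fin r) := Matrix.rank_le_card_width P
      _ = r := by simp
  by_contra hdet
  have hunit : IsUnit (S m n T) := (Matrix.isUnit_iff_isUnit_det _).mpr
    (isUnit_iff_ne_zero.mpr hdet)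
  have := Matrix.rank_of_isUnit _ hunit
  rw [this] at hrank
  simp at hrank
  omega


lemma borderRank_upper (m n : ℕ) : borderRankLE (Dicke m n) (m + 1) := by
  rcases Nat.eq_zero_or_pos m with hm | hm
  · subst hm
    refine ⟨fun _ => Dicke 0 n, fun s => ?_, tendsto_const_nhds⟩
    refine ⟨fun _ _ b => if b = 1 then 0 else 1, fun v => ?_⟩
    change Dicke 0 n v = _
    rw [Fin.sum_univ_one, prod_if 0 v, Dicke_apply]
    rcases Nat.eq_zero_or_pos (wt v) with h | h
    · simp [h]
    · rw [zero_pow (by omega), if_neg (by omega)]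
  · obtain ⟨c, hc⟩ := exists_c m
    set η : ℕ → ℂ := fun s => ((s + 1 : ℕ) : ℂ) with hη
    have hη0 : ∀ s, η s ≠ 0 := fun s => Nat.cast_ne_zero.mpr (Nat.succ_ne_zero s)
    set i₀ : Fin (m + n) := ⟨0, by omega⟩ with hi₀
    set U : ℕ → Fin (m+1) → Fin (m+n) → Fin 2 → ℂ :=
      fun s j i b => (if i = i₀ then c j * (η s) ^ m else 1) *
        (if b = 1 then (η s)⁻¹ * ((j : ℕ) : ℂ) else 1) with hU
    refine ⟨fun s v => ∑ j : Fin (m+1), ∏ i, U s j i (v i),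
      fun s => ⟨U s, fun v => rfl⟩, ?_⟩
    have key : ∀ (s : ℕ) (v : Fin (m+n) → Fin 2), (∑ j : Fin (m+1), ∏ i, U s j i (v i))
        = (∑ j : Fin (m+1), c j * ((j : ℕ) : ℂ) ^ wt v) * ((η s) ^ m * ((η s)⁻¹) ^ wt v) := by
      intro s v
      rw [Finset.sum_mul]
      refine Finset.sum_congr rfl fun j _ => ?_
      rw [hU]
      simp only []
      rw [Finset.prod_mul_distrib, Finset.prod_ite_eq' Finset.univ i₀
            (fun _ => c j * (η s) ^ m), if_pos (Finset.mem_univ i₀)]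
      rw [show (∏ i, (if v i = 1 then (η s)⁻¹ * ((j : ℕ) : ℂ) else 1))
          = ((η s)⁻¹ * ((j : ℕ) : ℂ)) ^ wt v from prod_if _ v]
      rw [mul_pow]
      ring
    rw [tendsto_pi_nhds]
    intro v
    rcases lt_trichotomy (wt v) m with h | h | h
    · have hA : (∑ j : Fin (m+1), c j * ((j : ℕ) : ℂ) ^ wt v) = 0 := by
        have h2 := hc ⟨wt v, by omega⟩
        simpa [Nat.ne_of_lt h] using h2
      simp only [key, hA, zero_mul]
      rw [Dicke_apply, if_neg (by omega)]
      exact tendsto_const_nhds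
    · have hA : (∑ j : Fin (m+1), c j * ((j : ℕ) : ℂ) ^ wt v) = 1 := by
        have h2 := hc ⟨wt v, by omega⟩
        simpa [h] using h2
      have hone : ∀ s, (η s) ^ m * ((η s)⁻¹) ^ wt v = 1 := by
        intro s; rw [h, ← mul_pow, mul_inv_cancel₀ (hη0 s), one_pow]
      simp only [key, hA, hone, one_mul]
      rw [Dicke_apply, if_pos h]
      exact tendsto_const_nhds
    · have hsplit : ∀ s, (η s) ^ m * ((η s)⁻¹) ^ wt v = ((η s)⁻¹) ^ (wt v - m) := by
        intro s
        calc (η s) ^ m * ((η s)⁻¹) ^ wt v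
            = (η s) ^ m * (((η s)⁻¹) ^ m * ((η s)⁻¹) ^ (wt v - m)) := by
              rw [← pow_add]; congr 2; omega
          _ = ((η s) * (η s)⁻¹) ^ m * ((η s)⁻¹) ^ (wt v - m) := by
              rw [mul_pow]; ring
          _ = ((η s)⁻¹) ^ (wt v - m) := by
              rw [mul_inv_cancel₀ (hη0 s), one_pow, one_mul]
      simp only [key, hsplit]
      rw [Dicke_apply, if_neg (by omega)]
      have hinv : Filter.Tendsto (fun s : ℕ => (η s)⁻¹) Filter.atTop (nhds 0) := by
        rw [tendsto_zero_iff_norm_tendsto_zero]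
        have hn : ∀ s : ℕ, ‖(η s)⁻¹‖ = 1 / ((s : ℝ) + 1) := by
          intro s
          rw [hη]
          simp only [norm_inv]
          rw [Complex.norm_natCast]
          push_cast
          rw [one_div]
      
        simp only [hn]
        exact tendsto_one_div_add_atTop_nhds_zero_nat
      have hpow := hinv.pow (wt v - m)
      rw [zero_pow (by omega : wt v - m ≠ 0)] at hpow
      have hfin := hpow.const_mul (∑ j : Fin (m+1), c j * ((j : ℕ) : ℂ) ^ wt v)
      simpa using hfin

end DickeAux

open DickeAux

/-- The Schmidt rank of D_{m,n} across the first-m vs last-n cut is m+1 (for m ≤ n);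
hence the border rank of D_{m,n} is exactly m+1. -/
theorem Dicke_schmidt_and_border_rank (m n : ℕ) (hmn : m ≤ n) :
    (DickeFlat m n).rank = m + 1 ∧
    borderRankLE (Dicke m n) (m + 1) ∧
    ∀ r : ℕ, borderRankLE (Dicke m n) r → m + 1 ≤ r := by
  refine ⟨flat_rank m n hmn, ?_, ?_⟩
  · exact borderRank_upper m n
  · -- lower bound on border rank
    rintro r ⟨f, hrank, htend⟩
    by_contra hr
    push_neg at hr
    have hdet0 : ∀ s, (S m n (f s)).det = 0 := fun s =>
      S_det_zero m n r hr (f s) (hrank s)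
    have hScont : Continuous (fun T : ((_ : Fin (m + n)) → Fin 2) → ℂ => S m n T) := by
      unfold S
      exact continuous_pi fun j => continuous_pi fun j' => continuous_apply _
    have hdcont : Continuous (fun T : ((_ : Fin (m + n)) → Fin 2) → ℂ => (S m n T).det) :=
      hScont.matrix_det
    have h1 : Filter.Tendsto (fun s => (S m n (f s)).det) Filter.atTop
        (nhds ((S m n (Dicke m n)).det)) :=
      (hdcont.tendsto _).comp htend
    have h2 : Filter.Tendsto (fun s : ℕ => (S m n (f s)).det) Filter.atTop (nhds 0) := by
      simp only [hdet0]; exact tendsto_const_nhds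
    have := tendsto_nhds_unique h1 h2
    rw [S_Dicke m n hmn, Matrix.det_one] at this
    exact one_ne_zero this
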